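/- Fix t > 0 and let Δ(z) = cos(t√z)·cos z − ((z+1)/2)·(sin(t√z)/√z)·sin z. If z ∈ ℂ is nonreal (Im z ≠ 0), then Δ(z) does not belong to the real interval [−1, 1]; in particular, all solutions of Δ(z)² = 1 are real. -/

import Mathlib

/-- The discriminant `Δ(z) = cos(t√z)·cos z − ((z+1)/2)·(sin(t√z)/√z)·sin z` of formula (6.4),
with `√z` taken as the principal branch `z^(1/2)`. -/
noncomputable def Delta (t : ℝ) (z : ℂ) : ℂ :=
  Complex.cos (t * z ^ (1 / 2 : ℂ)) * Complex.cos z -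
    ((z + 1) / 2) * (Complex.sin (t * z ^ (1 / 2 : ℂ)) / z ^ (1 / 2 : ℂ)) * Complex.sin z

open Complex intervalIntegral


lemma pt_zero {f : ℝ → ℝ} (hc : Continuous f) (hnn : ∀ x, 0 ≤ f x) {a b : ℝ}
    (h : ∫ x in a..b, f x = 0) {x0 : ℝ} (hx0 : x0 ∈ Set.Ioo a b) : f x0 = 0 := by
  by_contra h0
  have hpos : 0 < f x0 := lt_of_le_of_ne (hnn x0) (Ne.symm h0)
  obtain ⟨δ, hδ, hball⟩ : ∃ δ > 0, ∀ y, |y - x0| < δ → 0 < f y := by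
    have : ContinuousAt f x0 := hc.continuousAt
    rcases Metric.continuousAt_iff.mp this (f x0 / 2) (by linarith) with ⟨δ, hδ, hd⟩
    exact ⟨δ, hδ, fun y hy => by
      have := hd (show dist y x0 < δ by simpa [Real.dist_eq] using hy)
      rw [Real.dist_eq] at this
      have := abs_lt.mp this
      linarith [this.1]⟩
  set l := max a (x0 - δ/2) with hl
  set rr := min b (x0 + δ/2) with hrr
  have hal : a ≤ l := le_max_left _ _
  have hlx : l < x0 := max_lt hx0.1 (by linarith)
  have hxr : x0 < rr := lt_min hx0.2 (by linarith)
  have hrb : rr ≤ b := min_le_left _ _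
  have hmid : 0 < ∫ x in l..rr, f x := by
    apply intervalIntegral_pos_of_pos_on (hc.intervalIntegrable l rr)
    · intro x hx
      apply hball
      have h1 : x0 - δ/2 ≤ l := le_max_right _ _
      have h2 : rr ≤ x0 + δ/2 := min_le_right _ _
      have := hx.1; have := hx.2
      rw [abs_lt]; constructor <;> linarith
    · linarith
  have h1 : (0:ℝ) ≤ ∫ x in a..l, f x := integral_nonneg hal (fun x _ => hnn x)
  have h2 : (0:ℝ) ≤ ∫ x in rr..b, f x := integral_nonneg hrb (fun x _ => hnn x)
  have hsplit : ∫ x in a..b, f x = (∫ x in a..l, f x) + (∫ x in l..rr, f x) + (∫ x in rr..b, f x) := by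
    rw [integral_add_adjacent_intervals (hc.intervalIntegrable a l) (hc.intervalIntegrable l rr)]
    rw [integral_add_adjacent_intervals (hc.intervalIntegrable a rr) (hc.intervalIntegrable rr b)]
  rw [hsplit] at h
  linarith

lemma eig (p q rr ss μ : ℂ) (hdet : p*ss - q*rr = 1) (hchar : μ^2 - (p+ss)*μ + 1 = 0) :
    ∃ a b : ℂ, (a ≠ 0 ∨ b ≠ 0) ∧ p*a + q*b = μ*a ∧ rr*a + ss*b = μ*b := by
  by_cases h1 : q ≠ 0 ∨ μ - p ≠ 0
  · exact ⟨q, μ - p, h1, by ring, by linear_combination -hchar - hdet⟩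
  · push_neg at h1
    obtain ⟨hq, hp⟩ := h1
    by_cases h2 : rr ≠ 0 ∨ μ - ss ≠ 0
    · exact ⟨μ - ss, rr, h2.symm.imp id id, by linear_combination -hchar - hdet, by ring⟩
    · push_neg at h2
      obtain ⟨hr, hs⟩ := h2
      exact ⟨1, 0, Or.inl one_ne_zero, by rw [hq]; linear_combination -hp,
        by rw [hr]; ring⟩

/-- solution u -/
noncomputable def sol (w a b : ℂ) (x : ℝ) : ℂ :=
  a * Complex.cos (w*x) + b * Complex.sin (w*x)/w

noncomputable def sol' (w a b : ℂ) (x : ℝ) : ℂ :=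
  -(a*w) * Complex.sin (w*x) + b * Complex.cos (w*x)

lemma hasDerivAt_sol (w a b : ℂ) (hw : w ≠ 0) (x : ℝ) : HasDerivAt (sol w a b) (sol' w a b x) x := by
  have h1 : HasDerivAt (fun x : ℝ => w * (x:ℂ)) w x := by
    simpa using (Complex.ofRealCLM.hasDerivAt (x := x)).const_mul w
  have hcos : HasDerivAt (fun x : ℝ => Complex.cos (w*x)) (-Complex.sin (w*x) * w) x :=
    by have := (Complex.hasDerivAt_cos (w*x)).comp x h1; exact this
  have hsin : HasDerivAt (fun x : ℝ => Complex.sin (w*x)) (Complex.cos (w*x) * w) x :=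
    by have := (Complex.hasDerivAt_sin (w*x)).comp x h1; exact this
  have := ((hcos.const_mul a).add ((hsin.const_mul b).div_const w))
  convert this using 1
  · rfl
  · rfl
  unfold sol'
  field_simp

lemma hasDerivAt_sol' (w a b : ℂ) (x : ℝ) :
    HasDerivAt (sol' w a b) (-(w*w) * sol w a b x) x := by
  have h1 : HasDerivAt (fun x : ℝ => w * (x:ℂ)) w x := by
    simpa using (Complex.ofRealCLM.hasDerivAt (x := x)).const_mul w
  have hcos : HasDerivAt (fun x : ℝ => Complex.cos (w*x)) (-Complex.sin (w*x) * w) x :=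
    by have := (Complex.hasDerivAt_cos (w*x)).comp x h1; exact this
  have hsin : HasDerivAt (fun x : ℝ => Complex.sin (w*x)) (Complex.cos (w*x) * w) x :=
    by have := (Complex.hasDerivAt_sin (w*x)).comp x h1; exact this
  have := ((hsin.const_mul (-(a*w))).add (hcos.const_mul b))
  convert this using 1
  · rfl
  · rfl
  unfold sol
  by_cases hw : w = 0
  · simp [hw, sol']
  · field_simp; ring

lemma continuous_sol (w a b : ℂ) : Continuous (sol w a b) := by
  unfold sol; fun_prop

lemma continuous_sol' (w a b : ℂ) : Continuous (sol' w a b) := by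
  unfold sol'; fun_prop

/-- energy identity -/
lemma energy (w a b : ℂ) (hw : w ≠ 0) (T : ℝ) :
    ((∫ x in (0:ℝ)..T, Complex.normSq (sol' w a b x) : ℝ) : ℂ)
      - w^2 * ((∫ x in (0:ℝ)..T, Complex.normSq (sol w a b x) : ℝ) : ℂ)
    = sol' w a b T * (starRingEnd ℂ) (sol w a b T)
      - sol' w a b 0 * (starRingEnd ℂ) (sol w a b 0) := by
  have hF : ∀ x ∈ Set.uIcc (0:ℝ) T, HasDerivAt (fun y => sol' w a b y * (starRingEnd ℂ) (sol w a b y))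
      ((-(w*w) * sol w a b x) * (starRingEnd ℂ) (sol w a b x)
        + sol' w a b x * (starRingEnd ℂ) (sol' w a b x)) x := by
    intro x _
    exact (hasDerivAt_sol' w a b x).mul ((hasDerivAt_sol w a b hw x).star)
  have hint : IntervalIntegrable (fun x => (-(w*w) * sol w a b x) * (starRingEnd ℂ) (sol w a b x)
      + sol' w a b x * (starRingEnd ℂ) (sol' w a b x)) MeasureTheory.volume 0 T := by
    apply Continuous.intervalIntegrable
    exact ((continuous_const.mul (continuous_sol w a b)).mul ((continuous_sol w a b).star)).add
      ((continuous_sol' w a b).mul ((continuous_sol' w a b).star))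
  have key := intervalIntegral.integral_eq_sub_of_hasDerivAt hF hint
  rw [← key]
  have : ∀ x : ℝ, (-(w*w) * sol w a b x) * (starRingEnd ℂ) (sol w a b x)
      + sol' w a b x * (starRingEnd ℂ) (sol' w a b x)
      = -(w^2) * ((Complex.normSq (sol w a b x) : ℝ) : ℂ) + ((Complex.normSq (sol' w a b x) : ℝ) : ℂ) := by
    intro x
    rw [show (-(w*w) * sol w a b x) * (starRingEnd ℂ) (sol w a b x)
        = -(w^2) * (sol w a b x * (starRingEnd ℂ) (sol w a b x)) by ring,
      Complex.mul_conj, Complex.mul_conj]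
  rw [intervalIntegral.integral_congr (fun x _ => this x)]
  rw [intervalIntegral.integral_add, intervalIntegral.integral_const_mul,
    intervalIntegral.integral_ofReal, intervalIntegral.integral_ofReal]
  · ring
  · exact (continuous_const.mul (Complex.continuous_ofReal.comp (Complex.continuous_normSq.comp
      (continuous_sol w a b)))).intervalIntegrable _ _
  · exact (Complex.continuous_ofReal.comp (Complex.continuous_normSq.comp
      (continuous_sol' w a b))).intervalIntegrable _ _

set_option maxHeartbeats 2000000 in
lemma Delta_key (t : ℝ) (ht : 0 < t) (z : ℂ) (hzim : z.im ≠ 0) (r : ℝ)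
    (hr : r ∈ Set.Icc (-1:ℝ) 1) : Delta t z ≠ (r:ℂ) := by
  intro hΔ
  have hz0 : z ≠ 0 := fun h => hzim (by simp [h])

  set s : ℂ := z ^ (1/2 : ℂ) with hs
  have hs2 : s * s = z := by rw [hs, ← Complex.cpow_add _ _ hz0]; norm_num
  have hs0 : s ≠ 0 := fun h => hz0 (by rw [← hs2, h, mul_zero])
  set w : ℝ := Real.sqrt (1 - r^2) with hw
  have hw2r : w^2 = 1 - r^2 := Real.sq_sqrt (by nlinarith [hr.1, hr.2])
  have hw2 : (w:ℂ)^2 = 1 - (r:ℂ)^2 := by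
    rw [show ((w:ℂ))^2 = ((w^2 : ℝ) : ℂ) by push_cast; ring, hw2r]; push_cast; ring
  set μ : ℂ := (r:ℂ) + (w:ℂ) * Complex.I with hμ
  have hμchar : μ^2 - (2*(r:ℂ))*μ + 1 = 0 := by
    rw [hμ]; linear_combination ((w:ℂ)^2) * Complex.I_sq - hw2
  have hμμ : μ * (starRingEnd ℂ) μ = 1 := by
    rw [Complex.mul_conj]
    have : Complex.normSq μ = 1 := by
      simp [Complex.normSq_apply, hμ]
      nlinarith [hw2r]
    rw [this]; norm_num
  set C1 := Complex.cos z with hC1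
  set S1 := Complex.sin z with hS1
  set C2 := Complex.cos (s * (t:ℂ)) with hC2
  set S2 := Complex.sin (s * (t:ℂ)) with hS2
  have hpy1 : S1^2 + C1^2 = 1 := Complex.sin_sq_add_cos_sq z
  have hpy2 : S2^2 + C2^2 = 1 := Complex.sin_sq_add_cos_sq _
  set p := C1*C2 - S1*(s*S2)/z with hp
  set q := C1*S2/s + S1*C2/z with hq
  set rr := -(z*S1*C2) - s*C1*S2 with hrr
  set ss := -(z*S1*S2/s) + C1*C2 with hss
  have hdet : p*ss - q*rr = 1 := by
    have h : p*ss - q*rr = (S1^2 + C1^2) * (S2^2 + C2^2) * (z*s) / (z*s) := by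
      rw [hp, hq, hrr, hss]; field_simp; ring
    rw [h, hpy1, hpy2]; field_simp
  have hDe : Delta t z = C2*C1 - ((z+1)/2) * (S2/s) * S1 := by
    unfold Delta
    rw [← hs, mul_comm (t:ℂ) s, ← hC1, ← hS1, ← hC2, ← hS2]
  have htr : p + ss = 2 * (r:ℂ) := by
    have h2 : p + ss - 2 * (C2*C1 - ((z+1)/2) * (S2/s) * S1)
        = -S1*S2*(s*s - z)/(z*s) := by
      rw [hp, hss]; field_simp; ring
    rw [hs2, sub_self, mul_zero, zero_div, sub_eq_zero] at h2
    rw [h2, ← hDe, hΔ]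
  have hchar : μ^2 - (p+ss)*μ + 1 = 0 := by rw [htr]; linear_combination hμchar
  obtain ⟨a, b, hab, E1, E2⟩ := eig p q rr ss μ hdet hchar
  set c := sol s a b t with hcdef
  set d := sol' s a b t with hddef
  have hc : c = a*C2 + b*S2/s := rfl
  have hd : d = -(a*s)*S2 + b*C2 := rfl
  have hV1 : sol z c d 1 = μ * a := by
    have h0 : sol z c d 1 = c*C1 + d*S1/z := by
      unfold sol; norm_num [← hC1, ← hS1]
    rw [h0, hc, hd, ← E1, hp, hq]; field_simp; ring
  have hV1' : sol' z c d 1 = μ * b := by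
    have h0 : sol' z c d 1 = -(c*z)*S1 + d*C1 := by
      unfold sol'; norm_num [← hC1, ← hS1]
    rw [h0, hc, hd, ← E2, hrr, hss]; field_simp; ring
  have h00 : sol s a b 0 = a := by simp [sol]
  have h00' : sol' s a b 0 = b := by simp [sol']
  have h01 : sol z c d 0 = c := by simp [sol]
  have h01' : sol' z c d 0 = d := by simp [sol']
  have HE1 := energy s a b hs0 t
  have HE2 := energy z c d hz0 1
  rw [h00, h00'] at HE1
  rw [h01, h01', hV1, hV1'] at HE2
  set A := ∫ x in (0:ℝ)..t, Complex.normSq (sol s a b x) with hA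
  set K1 := ∫ x in (0:ℝ)..t, Complex.normSq (sol' s a b x) with hK1
  set B := ∫ x in (0:ℝ)..(1:ℝ), Complex.normSq (sol z c d x) with hB
  set K2 := ∫ x in (0:ℝ)..(1:ℝ), Complex.normSq (sol' z c d x) with hK2
  have hs2' : s^2 = z := by rw [sq]; exact hs2
  rw [hs2'] at HE1
  have hμba : (μ*b) * (starRingEnd ℂ) (μ*a) = b * (starRingEnd ℂ) a := by
    rw [map_mul]; linear_combination (b * (starRingEnd ℂ) a) * hμμ
  rw [hμba] at HE2
  have Hsum : ((K1 + K2 : ℝ) : ℂ) = z*(A:ℂ) + (z*z)*(B:ℂ) := by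
    push_cast
    have hzz : (z:ℂ)^2 = z*z := sq z
    linear_combination HE1 + HE2 + ((B:ℂ)) * hzz
  have him := congrArg Complex.im Hsum
  have hre := congrArg Complex.re Hsum
  simp [Complex.mul_im, Complex.mul_re] at him hre
  have hK1n : (0:ℝ) ≤ K1 := by
    rw [hK1]; exact intervalIntegral.integral_nonneg ht.le (fun x _ => Complex.normSq_nonneg _)
  have hK2n : (0:ℝ) ≤ K2 := by
    rw [hK2]; exact intervalIntegral.integral_nonneg zero_le_one (fun x _ => Complex.normSq_nonneg _)
  have hBn : (0:ℝ) ≤ B := by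
    rw [hB]; exact intervalIntegral.integral_nonneg zero_le_one (fun x _ => Complex.normSq_nonneg _)
  have him' : z.im * (A + 2*z.re*B) = 0 := by linear_combination -him
  have hsum2 : A + 2*z.re*B = 0 := (mul_eq_zero.mp him').resolve_left hzim
  have hre' : K1 + K2 = z.re*A + (z.re*z.re - z.im*z.im)*B := by linear_combination hre
  have hzim2 : (0:ℝ) < z.im^2 := by positivity
  have hfin : K1 + K2 + (z.re*z.re + z.im*z.im) * B = 0 := by
    linear_combination hre' + z.re * hsum2
  have hcoef : (0:ℝ) < z.re*z.re + z.im*z.im := by nlinarith [mul_self_nonneg z.re, hzim2]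
  have hB0 : B = 0 := by
    rcases eq_or_lt_of_le hBn with h | h
    · exact h.symm
    · nlinarith [mul_pos hcoef h]
  have hA0 : A = 0 := by rw [hB0] at hsum2; linarith
  have hK10 : K1 = 0 := by rw [hB0] at hfin; linarith
  rw [hA0] at hA; rw [hK10] at hK1
  have hU : sol s a b (t/2) = 0 := by
    refine Complex.normSq_eq_zero.mp (pt_zero (Complex.continuous_normSq.comp (continuous_sol s a b))
      (fun x => Complex.normSq_nonneg _) hA.symm ⟨by linarith, by linarith⟩)
  have hU' : sol' s a b (t/2) = 0 := by
    refine Complex.normSq_eq_zero.mp (pt_zero (Complex.continuous_normSq.comp (continuous_sol' s a b))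
      (fun x => Complex.normSq_nonneg _) hK1.symm ⟨by linarith, by linarith⟩)
  have e1 := hU; unfold sol at e1
  have e2 := hU'; unfold sol' at e2
  set CC := Complex.cos (s * ((t/2 : ℝ) : ℂ)) with hCCd
  set SS := Complex.sin (s * ((t/2 : ℝ) : ℂ)) with hSSd
  have hpy : SS^2 + CC^2 = 1 := Complex.sin_sq_add_cos_sq _
  have e1' : a*CC*s + b*SS = 0 := by field_simp at e1; linear_combination e1
  have hsa : s*a = 0 := by linear_combination CC*e1' - SS*e2 - (s*a)*hpy
  have ha : a = 0 := (mul_eq_zero.mp hsa).resolve_left hs0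
  have hb : b = 0 := by linear_combination SS*e1' + CC*e2 - b*hpy
  rcases hab with h | h
  · exact absurd ha h
  · exact absurd hb h

/-- For `t > 0`: if `z` is nonreal then `Δ(z)` is not in the real interval `[−1, 1]`;
in particular, all solutions of `Δ(z)² = 1` are real. -/
theorem Delta_nonreal_not_mem_Icc (t : ℝ) (ht : 0 < t) :
    (∀ z : ℂ, z.im ≠ 0 → ∀ r : ℝ, r ∈ Set.Icc (-1 : ℝ) 1 → Delta t z ≠ (r : ℂ)) ∧
    (∀ z : ℂ, (Delta t z) ^ 2 = 1 → z.im = 0) := by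
  constructor
  · exact fun z hzim r hr => Delta_key t ht z hzim r hr
  · intro z hsq
    by_contra hzim
    have hcases : Delta t z = 1 ∨ Delta t z = -1 := by
      have h : (Delta t z - 1) * (Delta t z + 1) = 0 := by linear_combination hsq
      rcases mul_eq_zero.mp h with h | h
      · exact Or.inl (by linear_combination h)
      · exact Or.inr (by linear_combination h)
    rcases hcases with h | h
    · exact Delta_key t ht z hzim 1 (by norm_num) (by rw [h]; norm_num)
    · exact Delta_key t ht z hzim (-1) (by norm_num) (by rw [h]; norm_num)
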